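/- If the DAG G with two-layer partition X ≺ Y has no edges among the second-layer nodes Y (i.e., the within-Y adjacency block C is zero) and P is faithful to G, then both H^(0) and H^(-j) coincide exactly with the true bipartite graph H of edges from X to Y. -/

import Mathlib

/-- Directed reachability in a digraph (reflexive-transitive closure of the edge relation). -/
def Reaches {V : Type*} (G : V → V → Prop) : V → V → Prop := Relation.ReflTransGen G

/-- A digraph is acyclic if no vertex lies on a directed cycle. -/
def Acyclic {V : Type*} (G : V → V → Prop) : Prop := ∀ v, ¬ Relation.TransGen G v v

/-- `p` is an (undirected) path from `a` to `b` in the digraph `G`. -/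
def IsTrail {V : Type*} (G : V → V → Prop) (a b : V) (p : List V) : Prop :=
  p.Chain' (fun x y => G x y ∨ G y x) ∧ p.head? = some a ∧ p.getLast? = some b ∧ p.Nodup

/-- Consecutive triples of a list. -/
def triples {V : Type*} : List V → List (V × V × V)
  | x :: y :: z :: r => (x, y, z) :: triples (y :: z :: r)
  | _ => []

/-- A triple `(x, y, z)` on a path is blocked by `S` if `y` is a collider none of whose
descendants lies in `S`, or `y` is a non-collider belonging to `S`. -/
def BlockedTriple {V : Type*} [DecidableEq V] (G : V → V → Prop) (S : Finset V)
    (t : V × V × V) : Prop :=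
  (G t.1 t.2.1 ∧ G t.2.2 t.2.1 ∧ ∀ d, Reaches G t.2.1 d → d ∉ S)
  ∨ (¬ (G t.1 t.2.1 ∧ G t.2.2 t.2.1) ∧ t.2.1 ∈ S)

/-- A path is blocked by `S` if some internal triple is blocked. -/
def Blocked {V : Type*} [DecidableEq V] (G : V → V → Prop) (S : Finset V) (p : List V) : Prop :=
  ∃ t ∈ triples p, BlockedTriple G S t

/-- `S` d-separates `a` and `b` in `G` if every path between them is blocked. -/
def DSep {V : Type*} [DecidableEq V] (G : V → V → Prop) (S : Finset V) (a b : V) : Prop :=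
  ∀ p : List V, IsTrail G a b p → Blocked G S p

lemma mem_triples_cons {V : Type*} (x : V) {t : V × V × V} {l : List V}
    (h : t ∈ triples l) : t ∈ triples (x :: l) := by
  match l with
  | [] => simp [triples] at h
  | [a] => simp [triples] at h
  | a :: b :: r => exact List.mem_cons_of_mem _ h

lemma mem_triples_append {V : Type*} :
    ∀ (l : List V) (a b c : V), (a, b, c) ∈ triples (l ++ [a, b, c])
  | [], a, b, c => by simp [triples]
  | x :: l, a, b, c => mem_triples_cons x (mem_triples_append l a b c)

/-- if a two-layer DAG `Xs ≺ Ys` has no edges among the second-layer nodes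
and the distribution is Markov and faithful to `G`, then both `H⁰` and `H^(-j)` coincide
exactly with the true bipartite graph `H` of edges from `Xs` to `Ys`. -/
theorem H0_and_Hminusj_exact_when_C_zero
    {V : Type*} [Fintype V] [DecidableEq V]
    (G : V → V → Prop) (Indep : V → V → Finset V → Prop)
    (Xs Ys : Finset V)
    (hpart : ∀ v, v ∈ Xs ∨ v ∈ Ys) (hdisj : Disjoint Xs Ys)
    (horder : ∀ a ∈ Ys, ∀ b ∈ Xs, ¬ G a b)
    (hCzero : ∀ a ∈ Ys, ∀ b ∈ Ys, ¬ G a b)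
    (hacy : Acyclic G)
    (hMarkov : ∀ a b S, DSep G S a b → Indep a b S)
    (hFaithful : ∀ a b S, Indep a b S → DSep G S a b) :
    ∀ k ∈ Xs, ∀ j ∈ Ys,
      ((¬ Indep k j (Xs \ {k})) ↔ G k j) ∧
      ((¬ Indep k j ((Xs \ {k}) ∪ (Ys \ {j}))) ↔ G k j) := by
  intro k hk j hj
  have hkj : k ≠ j := fun h => Finset.disjoint_left.mp hdisj hk (h ▸ hj)
  -- If G k j, then no set can d-separate (the direct edge path is unblockable).
  have forward : ∀ S : Finset V, G k j → ¬ Indep k j S := by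
    intro S hG hI
    have hd := hFaithful k j S hI [k, j]
      ⟨by simp [List.Chain', List.isChain_cons_cons]; exact Or.inl hG, rfl, rfl, by simp [hkj]⟩
    obtain ⟨t, ht, _⟩ := hd
    simp [triples] at ht
  -- If ¬ G k j, then any S containing Xs \ {k} d-separates k and j.
  have key : ¬ G k j → ∀ S : Finset V, Xs \ {k} ⊆ S → DSep G S k j := by
    intro hnG S hS p hp
    obtain ⟨hchain, hhead, hlast, _⟩ := hp
    rcases hq : p.reverse with _ | ⟨a, _ | ⟨b, _ | ⟨c, l⟩⟩⟩
    · rw [List.reverse_eq_nil_iff] at hq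
      subst hq; simp at hhead
    · have hp' : p = [a] := by
        rw [← List.reverse_reverse p, hq]; rfl
      subst hp'
      have h1 : a = k := by injection hhead
      have h2 : a = j := by simpa [List.getLast?] using hlast
      exact (hkj (h1.symm.trans h2)).elim
    · have hp' : p = [b, a] := by
        rw [← List.reverse_reverse p, hq]; rfl
      subst hp'
      have h1 : b = k := by injection hhead
      have h2 : a = j := by simpa [List.getLast?] using hlast
      simp only [List.Chain', List.isChain_cons_cons] at hchain
      rw [h1, h2] at hchain
      rcases hchain.1 with h | h
      · exact absurd h hnG
      · exact absurd h (horder j hj k hk)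
    · -- p = l.reverse ++ [c, b, a], with a = j
      have hp' : p = l.reverse ++ [c, b, a] := by
        rw [← List.reverse_reverse p, hq]; simp
      have ha : a = j := by
        have : p.getLast? = some a := by
          rw [← List.head?_reverse, hq]; rfl
        rw [this] at hlast; injection hlast
      rw [ha] at hp'
      -- the last triple is (c, b, j)
      have hmem : (c, b, j) ∈ triples p := by
        rw [hp']; exact mem_triples_append _ c b j
      have hsuf : [c, b, j] <:+ p := ⟨l.reverse, hp'.symm⟩
      have hch : List.Chain' (fun x y => G x y ∨ G y x) [c, b, j] := hchain.suffix hsuf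
      simp only [List.Chain', List.isChain_cons_cons] at hch
      obtain ⟨_, hba, _⟩ := hch
      -- b ∈ Xs
      have hbX : b ∈ Xs := by
        rcases hpart b with h | h
        · exact h
        · rcases hba with h' | h'
          · exact absurd h' (hCzero b h j hj)
          · exact absurd h' (hCzero j hj b h)
      have hGbj : G b j := by
        rcases hba with h' | h'
        · exact h'
        · exact absurd h' (horder j hj b hbX)
      have hbk : b ≠ k := fun h => hnG (h ▸ hGbj)
      refine ⟨(c, b, j), hmem, Or.inr ⟨fun h => horder j hj b hbX h.2, ?_⟩⟩
      exact hS (Finset.mem_sdiff.mpr ⟨hbX, by simpa using hbk⟩)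
  constructor
  · constructor
    · intro hnI
      by_contra hnG
      exact hnI (hMarkov _ _ _ (key hnG _ le_rfl))
    · exact fun hG => forward _ hG
  · constructor
    · intro hnI
      by_contra hnG
      exact hnI (hMarkov _ _ _ (key hnG _ Finset.subset_union_left))
    · exact fun hG => forward _ hG
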